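/- arXiv:2211.15239 — 5 statements merged into one kernel-verified Lean document; each statement's English description precedes it below -/
import Mathlib

section
/- Let β ∈ (1,2) and α ∈ (0,2−β). Then I(β,α) = (0,2−β) if and only if β is a multinacci number, i.e. β^k = β^{k−1} + β^{k−2} + ⋯ + β + 1 for some integer k ≥ 2. -/
noncomputable section

/-- The upper intermediate β-transformation `T⁺_{β,α}` on `[0,1]`. -/
def Tpos (β α : ℝ) (x : ℝ) : ℝ :=
  if x = (1 - α) / β then 0 else Int.fract (β * x + α)

/-- The lower intermediate β-transformation `T⁻_{β,α}` on `[0,1]`. -/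
def Tneg (β α : ℝ) (x : ℝ) : ℝ :=
  if x = (1 - α) / β then 1 else Int.fract (β * x + α)

/-- The itinerary `τ⁺_{β,α}(x)`: index `n` (from 0) is the `(n+1)`-st entry;
entry is `false` (i.e. 0) iff the `n`-th iterate is `< c`. -/
def tauPos (β α x : ℝ) : ℕ → Bool :=
  fun n => if (Tpos β α)^[n] x < (1 - α) / β then false else true

/-- The itinerary `τ⁻_{β,α}(x)`: entry is `false` (i.e. 0) iff the iterate is `≤ c`. -/
def tauNeg (β α x : ℝ) : ℕ → Bool :=
  fun n => if (Tneg β α)^[n] x ≤ (1 - α) / β then false else true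

/-- The kneading invariant `k₊` of `(β,α)`. -/
def kPlus (β α : ℝ) : ℕ → Bool := tauPos β α ((1 - α) / β)

/-- The kneading invariant `k₋` of `(β,α)`. -/
def kMinus (β α : ℝ) : ℕ → Bool := tauNeg β α ((1 - α) / β)

/-- The kneading space `Ω_{β,α}`. -/
def OmegaSet (β α : ℝ) : Set (ℕ → Bool) :=
  (tauPos β α '' Set.Icc 0 1) ∪ (tauNeg β α '' Set.Icc 0 1)

/-- `Ω` is a subshift of finite type: there is a finite set of finite forbidden words
such that `Ω` is exactly the set of sequences avoiding them. -/
def IsSFT (Ω : Set (ℕ → Bool)) : Prop :=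
  ∃ F : Finset (List Bool),
    Ω = {ω | ∀ m n : ℕ, List.ofFn (fun i : Fin n => ω (m + i)) ∉ F}

/-- `T_{β,α}` has matching. -/
def HasMatching (β α : ℝ) : Prop :=
  ∃ n : ℕ, (Tpos β α)^[n] 0 = (Tneg β α)^[n] 1

/-- The matching time: the smallest `n` with `(T⁺)ⁿ(0) = (T⁻)ⁿ(1)`. -/
def matchingTime (β α : ℝ) : ℕ :=
  sInf {n : ℕ | (Tpos β α)^[n] 0 = (Tneg β α)^[n] 1}

/-- `T_{β,α}` and `T_{β,α'}` have the same matching: both have matching, with the same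
matching time `n`, and their kneading invariants agree in the first `n+1` entries. -/
def SameMatching (β α α' : ℝ) : Prop :=
  HasMatching β α ∧ HasMatching β α' ∧ matchingTime β α = matchingTime β α' ∧
    ∀ i ≤ matchingTime β α, kPlus β α i = kPlus β α' i ∧ kMinus β α i = kMinus β α' i

/-- The matching set `I(β,α)` (a subset of `(0, 2-β)`). -/
def matchInterval (β α : ℝ) : Set ℝ :=
  {α' | α' ∈ Set.Ioo (0 : ℝ) (2 - β) ∧ SameMatching β α α'}

/-- The parameter region `Δ`. -/
def DeltaSet : Set (ℝ × ℝ) :=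
  {p | p.1 ∈ Set.Ioo (1 : ℝ) 2 ∧ p.2 ∈ Set.Ioo (0 : ℝ) (2 - p.1)}

/-- A sequence in `{0,1}^ℕ` is periodic. -/
def IsPeriodicSeq (ω : ℕ → Bool) : Prop :=
  ∃ p : ℕ, 1 ≤ p ∧ ∀ n, ω (n + p) = ω n

/-- A sequence in `{0,1}^ℕ` is eventually periodic. -/
def IsEvPeriodicSeq (ω : ℕ → Bool) : Prop :=
  ∃ k : ℕ, IsPeriodicSeq (fun n => ω (n + k))

/-- Strict lexicographic order on `{0,1}^ℕ`: at the first index where they differ,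
`ω` has entry 0 and `ν` has entry 1. -/
def lexLt (ω ν : ℕ → Bool) : Prop :=
  ∃ n : ℕ, (∀ m < n, ω m = ν m) ∧ ω n = false ∧ ν n = true


namespace MHelp

def S (β : ℝ) (j : ℕ) : ℝ := ∑ i ∈ Finset.range j, β ^ i

lemma S_zero (β : ℝ) : S β 0 = 0 := by simp [S]

lemma S_succ (β : ℝ) (j : ℕ) : S β (j+1) = β * S β j + 1 := geom_sum_succ

lemma S_nonneg {β : ℝ} (hβ : 0 ≤ β) (j : ℕ) : 0 ≤ S β j :=
  Finset.sum_nonneg fun i _ => pow_nonneg hβ i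

lemma S_one_le {β : ℝ} (hβ : 0 ≤ β) (j : ℕ) : 1 ≤ S β (j+1) := by
  have := S_nonneg hβ j
  rw [S_succ]; nlinarith

lemma S_mono {β : ℝ} (hβ : 0 ≤ β) {i j : ℕ} (h : i ≤ j) : S β i ≤ S β j :=
  Finset.sum_le_sum_of_subset_of_nonneg (Finset.range_subset_range.2 h)
    (fun k _ _ => pow_nonneg hβ k)

lemma S_mul (β : ℝ) (j : ℕ) : (β - 1) * S β j = β ^ j - 1 := by
  rw [S, mul_comm]; exact geom_sum_mul β j

variable {β a x : ℝ}

lemma lt_c_iff (hβ : 0 < β) : x < (1 - a)/β ↔ β * x + a < 1 := by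
  rw [lt_div_iff₀ hβ]; constructor <;> intro h <;> nlinarith

lemma le_c_iff (hβ : 0 < β) : x ≤ (1 - a)/β ↔ β * x + a ≤ 1 := by
  rw [le_div_iff₀ hβ]; constructor <;> intro h <;> nlinarith

lemma Tpos_c : Tpos β a ((1-a)/β) = 0 := if_pos rfl
lemma Tneg_c : Tneg β a ((1-a)/β) = 1 := if_pos rfl

lemma c_val (hβ : 0 < β) : β * ((1-a)/β) + a = 1 := by field_simp; ring

lemma ne_c_of_lt (hβ : 0 < β) (h : β * x + a < 1) : x ≠ (1-a)/β := by
  intro h'; rw [h', c_val hβ] at h; linarith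

lemma ne_c_of_gt (hβ : 0 < β) (h : 1 < β * x + a) : x ≠ (1-a)/β := by
  intro h'; rw [h', c_val hβ] at h; linarith

lemma Tpos_eq_low (hβ : 0 < β) (h0 : 0 ≤ β*x + a) (h1 : β*x + a < 1) :
    Tpos β a x = β*x + a := by
  rw [Tpos, if_neg (ne_c_of_lt hβ h1)]; exact Int.fract_eq_self.mpr ⟨h0, h1⟩

lemma Tneg_eq_high (hβ : 0 < β) (h1 : 1 < β*x+a) (h2 : β*x+a < 2) :
    Tneg β a x = β*x + a - 1 := by
  rw [Tneg, if_neg (ne_c_of_gt hβ h1)]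
  have h := Int.fract_sub_intCast (β*x+a) 1
  push_cast at h
  rw [← h]; exact Int.fract_eq_self.mpr ⟨by linarith, by linarith⟩

lemma kPlus_zero : kPlus β a 0 = true := by
  simp [kPlus, tauPos]

lemma kMinus_zero : kMinus β a 0 = false := by
  simp [kMinus, tauNeg]

lemma kPlus_succ_false_iff (j : ℕ) :
    (kPlus β a (j+1) = false) ↔ (Tpos β a)^[j] 0 < (1-a)/β := by
  unfold kPlus tauPos
  rw [Function.iterate_succ_apply, Tpos_c]
  by_cases h : (Tpos β a)^[j] 0 < (1-a)/β <;> simp [h]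

lemma kMinus_succ_true_iff (j : ℕ) :
    (kMinus β a (j+1) = true) ↔ ¬ ((Tneg β a)^[j] 1 ≤ (1-a)/β) := by
  unfold kMinus tauNeg
  rw [Function.iterate_succ_apply, Tneg_c]
  by_cases h : (Tneg β a)^[j] 1 ≤ (1-a)/β <;> simp [h]

/-- The master step lemma. -/
lemma orbit_step (hβ1 : 1 < β) (hβ2 : β < 2) (ha0 : 0 < a) (ha2 : a < 2 - β) (j : ℕ)
    (hu : (Tpos β a)^[j] 0 = a * S β j)
    (hv : (Tneg β a)^[j] 1 = β ^ j + (a - 1) * S β j)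
    (h1 : a * S β (j+1) < 1)
    (h2 : (1 - a) * S β (j+1) < β ^ (j+1)) :
    ((Tpos β a)^[j+1] 0 = a * S β (j+1) ∧
     (Tneg β a)^[j+1] 1 = β ^ (j+1) + (a - 1) * S β (j+1)) ∧
    ((Tpos β a)^[j] 0 < (1-a)/β ∧ ¬ ((Tneg β a)^[j] 1 ≤ (1-a)/β)) := by
  have hb0 : (0:ℝ) < β := by linarith
  have hs0 : 0 ≤ S β j := S_nonneg (le_of_lt hb0) j
  have hs1 : (1:ℝ) ≤ S β (j+1) := S_one_le (by linarith) j
  have hSs : S β (j+1) = β * S β j + 1 := S_succ β j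
  have key_u : β * (a * S β j) + a = a * S β (j+1) := by rw [hSs]; ring
  have key_v : β * (β^j + (a-1) * S β j) + a = (β^(j+1) + (a-1) * S β (j+1)) + 1 := by
    rw [hSs]; ring
  have hu1 : β * (a * S β j) + a < 1 := by rw [key_u]; exact h1
  have hu0 : 0 ≤ β * (a * S β j) + a := by nlinarith
  have hv1 : 1 < β * (β^j + (a-1)*S β j) + a := by rw [key_v]; nlinarith
  have hmul : (β - 1) * S β (j+1) = β^(j+1) - 1 := S_mul β (j+1)
  have hv2 : β * (β^j + (a-1)*S β j) + a < 2 := by rw [key_v]; nlinarith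
  refine ⟨⟨?_, ?_⟩, ?_, ?_⟩
  · rw [Function.iterate_succ_apply', hu, Tpos_eq_low hb0 hu0 hu1, key_u]
  · rw [Function.iterate_succ_apply', hv, Tneg_eq_high hb0 hv1 hv2]; linarith [key_v]
  · rw [hu, lt_c_iff hb0]; exact hu1
  · rw [hv, le_c_iff hb0]; push_neg; exact hv1

end MHelp

end

noncomputable section
namespace MHelp
variable {β a : ℝ}

lemma multi_pow (hβ1 : 1 < β) {k : ℕ} (hmn : β ^ k = S β k) :
    (2 - β) * β ^ k = 1 := by
  have h := S_mul β k
  rw [← hmn] at h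
  linear_combination -h

lemma multi_S_le (hβ1 : 1 < β) (hβ2 : β < 2) {k : ℕ} (hmn : β ^ k = S β k) {m : ℕ} (hm : m ≤ k) :
    S β m ≤ β ^ m := by
  have h1 : β ^ m ≤ β ^ k := pow_le_pow_right₀ (le_of_lt hβ1) hm
  have h2 : (2 - β) * β ^ k = 1 := multi_pow hβ1 hmn
  have h3 := S_mul β m
  have hb : (0:ℝ) < β - 1 := by linarith
  have h4 : (2 - β) * β ^ m ≤ (2 - β) * β ^ k :=
    mul_le_mul_of_nonneg_left h1 (by linarith)
  have h5 : (β - 1) * S β m ≤ (β - 1) * β ^ m := by nlinarith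
  exact le_of_mul_le_mul_left h5 hb

lemma multi_S_lt (hβ1 : 1 < β) (hβ2 : β < 2) {k : ℕ} (hmn : β ^ k = S β k) {m : ℕ} (hm : m < k) :
    S β m < β ^ m := by
  have h1 : β ^ m < β ^ k := pow_lt_pow_right₀ hβ1 hm
  have h2 : (2 - β) * β ^ k = 1 := multi_pow hβ1 hmn
  have h3 := S_mul β m
  have hb : (0:ℝ) < β - 1 := by linarith
  have h4 : (2 - β) * β ^ m < (2 - β) * β ^ k :=
    mul_lt_mul_of_pos_left h1 (by linarith)
  have h5 : (β - 1) * S β m < (β - 1) * β ^ m := by nlinarith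
  exact lt_of_mul_lt_mul_left h5 (le_of_lt hb)

/-- Orbit formulas and digits in the multinacci case, for every parameter `a`. -/
lemma multi_orbit (hβ1 : 1 < β) (hβ2 : β < 2) {k : ℕ}
    (hmn : β ^ k = S β k) (ha0 : 0 < a) (ha2 : a < 2 - β) :
    ∀ j ≤ k, ((Tpos β a)^[j] 0 = a * S β j ∧ (Tneg β a)^[j] 1 = β ^ j + (a-1) * S β j) ∧
      (j < k → ((Tpos β a)^[j] 0 < (1-a)/β ∧ ¬ ((Tneg β a)^[j] 1 ≤ (1-a)/β))) := by
  have hb0 : (0:ℝ) < β := by linarith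
  have step : ∀ j, j < k →
      ((Tpos β a)^[j] 0 = a * S β j ∧ (Tneg β a)^[j] 1 = β ^ j + (a-1) * S β j) →
      (((Tpos β a)^[j+1] 0 = a * S β (j+1) ∧
        (Tneg β a)^[j+1] 1 = β ^ (j+1) + (a-1) * S β (j+1)) ∧
       ((Tpos β a)^[j] 0 < (1-a)/β ∧ ¬ ((Tneg β a)^[j] 1 ≤ (1-a)/β))) := by
    intro j hj ⟨hu, hv⟩
    have hjk : j + 1 ≤ k := hj
    have hs1 : (1:ℝ) ≤ S β (j+1) := S_one_le (by linarith) j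
    have hSle : S β (j+1) ≤ β ^ (j+1) := multi_S_le hβ1 hβ2 hmn hjk
    have hSk : S β (j+1) ≤ S β k := S_mono (by linarith) hjk
    have hSkval : (2 - β) * S β k ≤ 1 := by
      have := multi_S_le hβ1 hβ2 hmn (le_refl k)
      have h2 := multi_pow hβ1 hmn
      nlinarith
    have h1 : a * S β (j+1) < 1 := by nlinarith
    have h2 : (1 - a) * S β (j+1) < β ^ (j+1) := by nlinarith
    exact orbit_step hβ1 hβ2 ha0 ha2 j hu hv h1 h2
  intro j
  induction j with
  | zero =>
      intro _
      refine ⟨⟨by simp [S_zero], by simp [S_zero]⟩, fun hk => (step 0 hk ⟨by simp [S_zero], by simp [S_zero]⟩).2⟩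
  | succ j ih =>
      intro hjk
      have hj : j < k := hjk
      have ihj := (ih (le_of_lt hj)).1
      refine ⟨(step j hj ihj).1, fun hk' => (step (j+1) hk' (step j hj ihj).1).2⟩

lemma multi_matching (hβ1 : 1 < β) (hβ2 : β < 2) {k : ℕ} (hk2 : 2 ≤ k)
    (hmn : β ^ k = S β k) (ha0 : 0 < a) (ha2 : a < 2 - β) :
    matchingTime β a = k ∧ HasMatching β a ∧
      (∀ j, j ≤ k → kPlus β a j = decide (j = 0) ∧ kMinus β a j = !decide (j = 0)) := by
  have horb := multi_orbit hβ1 hβ2 hmn ha0 ha2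
  have hkmem : (Tpos β a)^[k] 0 = (Tneg β a)^[k] 1 := by
    rw [(horb k le_rfl).1.1, (horb k le_rfl).1.2]
    linear_combination -hmn
  have hnot : ∀ j, j < k → (Tpos β a)^[j] 0 ≠ (Tneg β a)^[j] 1 := by
    intro j hj heq
    rw [(horb j (le_of_lt hj)).1.1, (horb j (le_of_lt hj)).1.2] at heq
    have := multi_S_lt hβ1 hβ2 hmn hj
    nlinarith
  have hM : HasMatching β a := ⟨k, hkmem⟩
  have hT : matchingTime β a = k := by
    have hle : matchingTime β a ≤ k := Nat.sInf_le hkmem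
    have hmem := Nat.sInf_mem hM
    rcases Nat.lt_or_ge (matchingTime β a) k with h | h
    · exact absurd hmem (hnot _ h)
    · exact le_antisymm hle h
  refine ⟨hT, hM, ?_⟩
  rintro (_ | j) hj
  · simpa using ⟨kPlus_zero, kMinus_zero⟩
  · have hj' : j < k := hj
    have hd := (horb j (le_of_lt hj')).2 hj'
    constructor
    · rw [(kPlus_succ_false_iff j).mpr hd.1]; simp
    · rw [(kMinus_succ_true_iff j).mpr hd.2]; simp

end MHelp

open MHelp in
theorem matchInterval_full_iff_multinacci (β α : ℝ)
    (hβ : β ∈ Set.Ioo (1 : ℝ) 2) (hα : α ∈ Set.Ioo (0 : ℝ) (2 - β)) :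
    matchInterval β α = Set.Ioo (0 : ℝ) (2 - β) ↔
      ∃ k : ℕ, 2 ≤ k ∧ β ^ k = ∑ i ∈ Finset.range k, β ^ i := by
  obtain ⟨hβ1, hβ2⟩ := hβ
  have hb0 : (0:ℝ) < β := by linarith
  constructor
  · intro h
    have hSM : ∀ a, a ∈ Set.Ioo (0:ℝ) (2-β) → SameMatching β α a := by
      intro a ha'
      have : a ∈ matchInterval β α := by rw [h]; exact ha'
      exact this.2
    have hM : HasMatching β α := (hSM α hα).1
    obtain ⟨n, hn⟩ : ∃ n, n = matchingTime β α := ⟨_, rfl⟩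
    have hnmem : (Tpos β α)^[n] 0 = (Tneg β α)^[n] 1 := by rw [hn]; exact Nat.sInf_mem hM
    have main : ∀ j, j ≤ n → ∀ a ∈ Set.Ioo (0:ℝ) (2-β),
        (Tpos β a)^[j] 0 = a * S β j ∧ (Tneg β a)^[j] 1 = β^j + (a-1) * S β j := by
      intro j
      induction j with
      | zero => intro _ a _; simp [S_zero]
      | succ j ih =>
        intro hjn a ha
        have ihj := ih (Nat.le_of_succ_le hjn)
        have hs1 : (1:ℝ) ≤ S β (j+1) := S_one_le (by linarith) j
        have hs0 : (0:ℝ) ≤ S β j := S_nonneg (by linarith) j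
        have hSs : S β (j+1) = β * S β j + 1 := S_succ β j
        have hjn' : j + 1 ≤ matchingTime β α := by rw [← hn]; exact hjn
        -- the (j+1)-st entry of kPlus is false: test a small parameter
        have hKp : kPlus β α (j+1) = false := by
          set a0 := min α (1/(S β (j+1) + 1)) with ha0def
          have ha0p : 0 < a0 := lt_min hα.1 (by positivity)
          have ha0m : a0 ∈ Set.Ioo (0:ℝ) (2-β) :=
            ⟨ha0p, lt_of_le_of_lt (min_le_left _ _) hα.2⟩
          have hu0 := (ihj a0 ha0m).1
          have h1 : a0 * S β (j+1) < 1 := by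
            have hle : a0 * S β (j+1) ≤ (1/(S β (j+1) + 1)) * S β (j+1) :=
              mul_le_mul_of_nonneg_right (min_le_right _ _) (by linarith)
            have heq : (1/(S β (j+1) + 1)) * S β (j+1) = S β (j+1) / (S β (j+1) + 1) := by
              ring
            have hlt : S β (j+1) / (S β (j+1) + 1) < 1 :=
              (div_lt_one (by linarith)).mpr (by linarith)
            linarith [heq ▸ hle]
          have hdig : kPlus β a0 (j+1) = false := by
            rw [kPlus_succ_false_iff j, hu0, lt_c_iff hb0]
            have : β * (a0 * S β j) + a0 = a0 * S β (j+1) := by rw [hSs]; ring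
            linarith
          have hc := ((hSM a0 ha0m).2.2.2 (j+1) hjn').1
          rw [hc, hdig]
        -- the (j+1)-st entry of kMinus is true: test a parameter near 2-β
        have hKm : kMinus β α (j+1) = true := by
          set ε := min ((2-β)/2) (1/(S β (j+1) + 1)) with hεdef
          have hεp : 0 < ε := lt_min (by linarith) (by positivity)
          have hε1 : ε * S β (j+1) < 1 := by
            have hle : ε * S β (j+1) ≤ (1/(S β (j+1) + 1)) * S β (j+1) :=
              mul_le_mul_of_nonneg_right (min_le_right _ _) (by linarith)
            have hlt : (1/(S β (j+1) + 1)) * S β (j+1) < 1 := by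
              rw [div_mul_eq_mul_div, one_mul, div_lt_one (by linarith)]; linarith
            linarith
          set a1 := 2 - β - ε with ha1def
          have ha1m : a1 ∈ Set.Ioo (0:ℝ) (2-β) := by
            constructor
            · have : ε ≤ (2-β)/2 := min_le_left _ _
              simp only [ha1def]; linarith
            · simp only [ha1def]; linarith
          have hv1 := (ihj a1 ha1m).2
          have hmul : (β - 1) * S β (j+1) = β^(j+1) - 1 := S_mul β (j+1)
          have h2 : (1 - a1) * S β (j+1) < β ^ (j+1) := by
            have : 1 - a1 = β - 1 + ε := by rw [ha1def]; ring
            rw [this]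
            nlinarith
          have hdig : kMinus β a1 (j+1) = true := by
            rw [kMinus_succ_true_iff j, hv1, le_c_iff hb0]
            push_neg
            have hkey : β * (β^j + (a1-1) * S β j) + a1 = (β^(j+1) + (a1-1) * S β (j+1)) + 1 := by
              rw [hSs]; ring
            nlinarith
          have hc := ((hSM a1 ha1m).2.2.2 (j+1) hjn').2
          rw [hc, hdig]
        -- now transfer to our arbitrary a
        have hca := hSM a ha
        have hu := (ihj a ha).1
        have hv := (ihj a ha).2
        have hdigp : kPlus β a (j+1) = false := by rw [← (hca.2.2.2 (j+1) hjn').1, hKp]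
        have hdigm : kMinus β a (j+1) = true := by rw [← (hca.2.2.2 (j+1) hjn').2, hKm]
        have h1 : a * S β (j+1) < 1 := by
          have := (kPlus_succ_false_iff j).mp hdigp
          rw [hu, lt_c_iff hb0] at this
          rw [hSs]; nlinarith
        have h2 : (1 - a) * S β (j+1) < β ^ (j+1) := by
          have := (kMinus_succ_true_iff j).mp hdigm
          rw [hv, le_c_iff hb0] at this
          push_neg at this
          have hkey : β * (β^j + (a-1) * S β j) + a = (β^(j+1) + (a-1) * S β (j+1)) + 1 := by
            rw [hSs]; ring
          nlinarith
        exact (orbit_step hβ1 hβ2 ha.1 ha.2 j hu hv h1 h2).1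
    have hfin := main n le_rfl α hα
    have hkey : β ^ n = S β n := by
      rw [hfin.1, hfin.2] at hnmem
      linarith
    refine ⟨n, ?_, hkey⟩
    rcases n with _ | _ | m
    · exfalso; rw [S_zero] at hkey; norm_num at hkey
    · exfalso
      have : S β 1 = 1 := by simp [S]
      rw [this, pow_one] at hkey; linarith
    · omega
  · rintro ⟨k, hk2, hmn⟩
    have hmn' : β ^ k = S β k := hmn
    ext a
    simp only [matchInterval, Set.mem_setOf_eq]
    constructor
    · exact fun h => h.1
    · intro ha
      refine ⟨ha, ?_⟩
      obtain ⟨hTα, hMα, hKα⟩ := multi_matching hβ1 hβ2 hk2 hmn' hα.1 hα.2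
      obtain ⟨hTa, hMa, hKa⟩ := multi_matching hβ1 hβ2 hk2 hmn' ha.1 ha.2
      refine ⟨hMα, hMa, by rw [hTα, hTa], ?_⟩
      intro i hi
      rw [hTα] at hi
      refine ⟨?_, ?_⟩
      · rw [(hKα i hi).1, (hKa i hi).1]
      · rw [(hKα i hi).2, (hKa i hi).2]
end
end

section
/- Let v = (v₁v₂…), w = (w₁w₂…) ∈ {0,1}^ℕ with v₁ = 1, v₂ = 0, w₁ = 0, w₂ = 1, let k ≥ 2 and 1 ≤ r < k be integers, and assume: v_i = w_i for all i > k; v_i = w_{r+i} for all 1 ≤ i ≤ k−r; v_{k−r+i} = w_{k+i} for all 1 ≤ i ≤ r; and w_{k+i} = w_i for all 1 ≤ i ≤ r. Then there is no (β,α) ∈ Δ whose kneading invariants are (k₊, k₋) = (v, w). -/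
noncomputable section

lemma bool_if_iff {P Q : Prop} [Decidable P] [Decidable Q]
    (h : (if P then (false : Bool) else true) = (if Q then (false : Bool) else true)) :
    P ↔ Q := by
  by_cases hP : P <;> by_cases hQ : Q <;> simp_all

theorem not_linearizable_of_shift_relation (v w : ℕ → Bool)
    (hv0 : v 0 = true) (hv1 : v 1 = false) (hw0 : w 0 = false) (hw1 : w 1 = true)
    (k r : ℕ) (hk : 2 ≤ k) (hr : 1 ≤ r) (hrk : r < k)
    (h1 : ∀ j, k ≤ j → v j = w j)
    (h2 : ∀ j < k - r, v j = w (r + j))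
    (h3 : ∀ j < r, v (k - r + j) = w (k + j))
    (h4 : ∀ j < r, w (k + j) = w j) :
    ¬ ∃ β α : ℝ, β ∈ Set.Ioo (1 : ℝ) 2 ∧ α ∈ Set.Ioo (0 : ℝ) (2 - β) ∧
      kPlus β α = v ∧ kMinus β α = w := by
  rintro ⟨β, α, ⟨hβ1, hβ2⟩, ⟨hα1, hα2⟩, hkp, hkm⟩
  have hβ0 : (0 : ℝ) < β := by linarith
  have hα3 : α < 1 := by linarith
  set c : ℝ := (1 - α) / β with hcdef
  have hcβ : β * c + α = 1 := by
    rw [hcdef, mul_div_assoc', mul_comm β (1 - α), mul_div_assoc, div_self hβ0.ne']; ring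
  have hc0 : 0 < c := div_pos (by linarith) hβ0
  have hc1 : c ≤ 1 := by
    rw [hcdef, div_le_one hβ0]; linarith
  set f : ℕ → ℝ := fun n => (Tneg β α)^[n] c with hfdef
  set g : ℕ → ℝ := fun n => (Tpos β α)^[n] c with hgdef
  have hfm : ∀ n, 0 ≤ f n ∧ f n ≤ 1 := by
    intro n
    induction n with
    | zero => exact ⟨hc0.le, hc1⟩
    | succ n ih =>
      have hstep : f (n + 1) = Tneg β α (f n) := Function.iterate_succ_apply' _ _ _
      rw [hstep]
      unfold Tneg
      split
      · norm_num
      · exact ⟨Int.fract_nonneg _, (Int.fract_lt_one _).le⟩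
  have hgm : ∀ n, 0 ≤ g n ∧ g n ≤ 1 := by
    intro n
    induction n with
    | zero => exact ⟨hc0.le, hc1⟩
    | succ n ih =>
      have hstep : g (n + 1) = Tpos β α (g n) := Function.iterate_succ_apply' _ _ _
      rw [hstep]
      unfold Tpos
      split
      · norm_num
      · exact ⟨Int.fract_nonneg _, (Int.fract_lt_one _).le⟩
  -- affine formulas
  have hTneg : ∀ x : ℝ, 0 ≤ x → x ≤ 1 →
      Tneg β α x = β * x + α - (if c < x then 1 else 0) := by
    intro x hx0 hx1
    unfold Tneg
    by_cases hxc : x = c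
    · subst hxc
      rw [if_pos rfl, if_neg (lt_irrefl c)]
      linarith [hcβ]
    · rw [if_neg (by rw [← hcdef]; exact hxc)]
      rcases lt_or_gt_of_ne hxc with hlt | hgt
      · rw [if_neg (not_lt.2 hlt.le)]
        have h01 : 0 ≤ β * x + α ∧ β * x + α < 1 := by
          constructor
          · nlinarith
          · nlinarith [hcβ]
        rw [Int.fract_eq_self.2 h01]; ring
      · rw [if_pos hgt]
        have h01 : 0 ≤ β * x + α - 1 ∧ β * x + α - 1 < 1 := by
          constructor
          · nlinarith [hcβ]
          · nlinarith
        have : β * x + α - 1 = β * x + α - (1 : ℤ) := by push_cast; ring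
        rw [show β * x + α = (β * x + α - 1) + (1:ℤ) by push_cast; ring,
          Int.fract_add_intCast, Int.fract_eq_self.2 h01]
        push_cast; ring
  have hTpos : ∀ x : ℝ, 0 ≤ x → x ≤ 1 →
      Tpos β α x = β * x + α - (if c ≤ x then 1 else 0) := by
    intro x hx0 hx1
    unfold Tpos
    by_cases hxc : x = c
    · subst hxc
      rw [if_pos rfl, if_pos le_rfl]
      linarith [hcβ]
    · rw [if_neg (by rw [← hcdef]; exact hxc)]
      rcases lt_or_gt_of_ne hxc with hlt | hgt
      · rw [if_neg (not_le.2 hlt)]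
        have h01 : 0 ≤ β * x + α ∧ β * x + α < 1 := by
          constructor
          · nlinarith
          · nlinarith [hcβ]
        rw [Int.fract_eq_self.2 h01]; ring
      · rw [if_pos hgt.le]
        have h01 : 0 ≤ β * x + α - 1 ∧ β * x + α - 1 < 1 := by
          constructor
          · nlinarith [hcβ]
          · nlinarith
        rw [show β * x + α = (β * x + α - 1) + (1:ℤ) by push_cast; ring,
          Int.fract_add_intCast, Int.fract_eq_self.2 h01]
        push_cast; ring
  -- itinerary bits
  have hw : ∀ n, w n = (if f n ≤ c then false else true) := by
    intro n; rw [← hkm]; rfl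
  have hv : ∀ n, v n = (if g n < c then false else true) := by
    intro n; rw [← hkp]; rfl
  -- step lemmas for pairs with equal bits
  have stepNN : ∀ m n : ℕ, (f m ≤ c ↔ f n ≤ c) →
      f (m + 1) - f (n + 1) = β * (f m - f n) := by
    intro m n hiff
    have e1 : f (m + 1) = Tneg β α (f m) := Function.iterate_succ_apply' _ _ _
    have e2 : f (n + 1) = Tneg β α (f n) := Function.iterate_succ_apply' _ _ _
    rw [e1, e2, hTneg _ (hfm m).1 (hfm m).2, hTneg _ (hfm n).1 (hfm n).2]
    have : (c < f m ↔ c < f n) := by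
      rw [← not_le, ← not_le]; exact not_congr hiff
    by_cases hm : c < f m
    · rw [if_pos hm, if_pos (this.1 hm)]; ring
    · rw [if_neg hm, if_neg (fun h => hm (this.2 h))]; ring
  have stepNP : ∀ m n : ℕ, (f m ≤ c ↔ g n < c) →
      f (m + 1) - g (n + 1) = β * (f m - g n) := by
    intro m n hiff
    have e1 : f (m + 1) = Tneg β α (f m) := Function.iterate_succ_apply' _ _ _
    have e2 : g (n + 1) = Tpos β α (g n) := Function.iterate_succ_apply' _ _ _
    rw [e1, e2, hTneg _ (hfm m).1 (hfm m).2, hTpos _ (hgm n).1 (hgm n).2]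
    have : (c < f m ↔ c ≤ g n) := by
      simpa [not_le, not_lt] using not_congr hiff
    by_cases hm : c < f m
    · rw [if_pos hm, if_pos (this.1 hm)]; ring
    · rw [if_neg hm, if_neg (fun h => hm (this.2 h))]; ring
  -- bits for chain B : v j = w (r + j) for all j < k
  have hbitB : ∀ j, j < k → v j = w (r + j) := by
    intro j hj
    rcases lt_or_ge j (k - r) with h | h
    · exact h2 j h
    · have hi : j - (k - r) < r := by omega
      have e1 : k - r + (j - (k - r)) = j := by omega
      have e2 : k + (j - (k - r)) = r + j := by omega
      have := h3 (j - (k - r)) hi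
      rw [e1, e2] at this
      exact this
  -- Chain A : f (k + j) - f j = β ^ j * (f k - c)
  have chainA : ∀ j, j ≤ r → f (k + j) - f j = β ^ j * (f k - c) := by
    intro j
    induction j with
    | zero =>
      intro _
      have : f 0 = c := rfl
      simp [this]
    | succ j ih =>
      intro hj
      have hjr : j < r := by omega
      have hiff : f (k + j) ≤ c ↔ f j ≤ c := by
        apply bool_if_iff
        rw [← hw, ← hw]
        exact h4 j hjr
      have := stepNN (k + j) j hiff
      have ihv := ih (le_of_lt hjr)
      have hkj : k + (j + 1) = (k + j) + 1 := by omega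
      rw [hkj]
      rw [this, ihv]
      ring
  -- Chain B : f (r + j) - g j = β ^ j * (f r - c)
  have chainB : ∀ j, j ≤ k → f (r + j) - g j = β ^ j * (f r - c) := by
    intro j
    induction j with
    | zero =>
      intro _
      have : g 0 = c := rfl
      simp [this]
    | succ j ih =>
      intro hj
      have hjk : j < k := by omega
      have hiff : f (r + j) ≤ c ↔ g j < c := by
        apply bool_if_iff
        rw [← hw, ← hv]
        exact (hbitB j hjk).symm
      have := stepNP (r + j) j (hiff)
      have ihv := ih (le_of_lt hjk)
      have hkj : r + (j + 1) = (r + j) + 1 := by omega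
      rw [hkj]
      rw [this, ihv]
      ring
  -- Chain C : f (k + n) - g (k + n) = β ^ n * (f k - g k)
  have chainC : ∀ n, f (k + n) - g (k + n) = β ^ n * (f k - g k) := by
    intro n
    induction n with
    | zero => simp
    | succ n ih =>
      have hiff : f (k + n) ≤ c ↔ g (k + n) < c := by
        apply bool_if_iff
        rw [← hw, ← hv]
        exact (h1 (k + n) (by omega)).symm
      have := stepNP (k + n) (k + n) hiff
      have hkn : k + (n + 1) = (k + n) + 1 := by omega
      rw [hkn, this, ih]
      ring
  -- matching : f k = g k
  have zeq : f k = g k := by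
    by_contra hne
    have hd : 0 < |f k - g k| := abs_pos.2 (sub_ne_zero.2 hne)
    obtain ⟨n, hn⟩ := pow_unbounded_of_one_lt (1 / |f k - g k|) hβ1
    have hb1 : |f (k + n) - g (k + n)| ≤ 1 := by
      have h1' := hfm (k + n); have h2' := hgm (k + n)
      rw [abs_le]; constructor <;> linarith [h1'.1, h1'.2, h2'.1, h2'.2]
    rw [chainC n, abs_mul, abs_pow, abs_of_pos hβ0] at hb1
    have : 1 < β ^ n * |f k - g k| := by
      rw [div_lt_iff₀ hd] at hn
      linarith
    linarith
  -- sign facts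
  have hwr : c < f r := by
    have hb : w r = true := by
      have := h2 0 (by omega)
      rw [add_zero] at this
      rw [← this, hv0]
    rw [hw r] at hb
    by_contra hle
    rw [if_pos (not_lt.1 hle)] at hb
    exact Bool.false_ne_true hb
  have hwk : f k ≤ c := by
    have hb : w k = false := by
      have := h4 0 (by omega)
      rw [add_zero] at this
      rw [this, hw0]
    rw [hw k] at hb
    by_contra hle
    rw [if_neg hle] at hb
    simp at hb
  -- final contradiction
  have eA := chainA r le_rfl
  have eB := chainB k le_rfl
  rw [add_comm r k, ← zeq] at eB
  have hk1 : (1 : ℝ) < β ^ k := one_lt_pow₀ hβ1 (by omega)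
  have hr1 : (1 : ℝ) ≤ β ^ r := one_le_pow₀ hβ1.le
  nlinarith [mul_pos (sub_pos.2 hk1) (sub_pos.2 hwr),
    mul_nonneg (sub_nonneg.2 hr1) (sub_nonneg.2 hwk)]
end
end

section
/- Fix β ∈ (1,2) and let α, α′ ∈ (0,2−β). Let (k₊,k₋) be the kneading invariants of (β,α) and (k₊′,k₋′) those of (β,α′). Then k₋ ≺ k₋′ ≺ k₊ ≺ k₊′ in the lexicographic order if and only if α < α′. -/
noncomputable section

-- auxiliary
def bv (d : Bool) : ℝ := if d then 1 else 0

lemma lexLt_irrefl (ω : ℕ → Bool) : ¬ lexLt ω ω := by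
  rintro ⟨n, -, h1, h2⟩; simp [h1] at h2

lemma lexLt_asymm {ω ν : ℕ → Bool} (h1 : lexLt ω ν) (h2 : lexLt ν ω) : False := by
  obtain ⟨n, hn, hn0, hn1⟩ := h1
  obtain ⟨k, hk, hk0, hk1⟩ := h2
  rcases lt_trichotomy n k with h | h | h
  · have := hk n h; rw [hn0, hn1] at this; exact absurd this (by simp)
  · subst h; rw [hn0] at hk1; exact absurd hk1 (by simp)
  · have := hn k h; rw [hk0, hk1] at this; exact absurd this (by simp)

/-- The generic monotonicity lemma. -/
lemma lex_aux (β α α' c c' : ℝ) (T T' : ℝ → ℝ) (dg dg' : ℝ → Bool)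
    (hβ1 : 1 ≤ β)
    (hc : c ∈ Set.Icc (0:ℝ) 1) (hc' : c' ∈ Set.Icc (0:ℝ) 1)
    (hΔ : β * c + α = β * c' + α')
    (hδ : α < α')
    (hT : ∀ x ∈ Set.Icc (0:ℝ) 1, T x ∈ Set.Icc (0:ℝ) 1 ∧ T x = β * x + α - bv (dg x))
    (hT' : ∀ x ∈ Set.Icc (0:ℝ) 1, T' x ∈ Set.Icc (0:ℝ) 1 ∧ T' x = β * x + α' - bv (dg' x))
    (h0 : dg c = dg' c')
    (hcross : ∀ x y : ℝ, x ≤ y → dg x = true → dg' y = false → False) :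
    lexLt (fun n => dg (T^[n] c)) (fun n => dg' (T'^[n] c')) := by
  set x : ℕ → ℝ := fun n => T^[n] c with hxdef
  set y : ℕ → ℝ := fun n => T'^[n] c' with hydef
  have hx : ∀ n, x n ∈ Set.Icc (0:ℝ) 1 := by
    intro n; induction n with
    | zero => exact hc
    | succ n ih =>
      have : x (n+1) = T (x n) := Function.iterate_succ_apply' T n c
      rw [this]; exact (hT _ ih).1
  have hy : ∀ n, y n ∈ Set.Icc (0:ℝ) 1 := by
    intro n; induction n with
    | zero => exact hc'
    | succ n ih =>
      have : y (n+1) = T' (y n) := Function.iterate_succ_apply' T' n c'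
      rw [this]; exact (hT' _ ih).1
  have hxs : ∀ n, x (n+1) = β * x n + α - bv (dg (x n)) := by
    intro n
    have h1 : x (n+1) = T (x n) := Function.iterate_succ_apply' T n c
    rw [h1]; exact (hT _ (hx n)).2
  have hys : ∀ n, y (n+1) = β * y n + α' - bv (dg' (y n)) := by
    intro n
    have h1 : y (n+1) = T' (y n) := Function.iterate_succ_apply' T' n c'
    rw [h1]; exact (hT' _ (hy n)).2
  have hδ' : (0:ℝ) < α' - α := by linarith
  -- Claim C
  have claimC : ∀ n, (∀ m ≤ n, dg (x m) = dg' (y m)) → (α' - α) * n ≤ y (n+1) - x (n+1) := by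
    intro n
    induction n with
    | zero =>
      intro _
      have h1 := hxs 0
      have h2 := hys 0
      have hx0 : x 0 = c := rfl
      have hy0 : y 0 = c' := rfl
      rw [hx0] at h1; rw [hy0] at h2
      rw [h0] at h1
      simp only [Nat.cast_zero]
      linarith
    | succ n ih =>
      intro hagree
      have ihh := ih (fun m hm => hagree m (le_trans hm (Nat.le_succ n)))
      have h1 := hxs (n+1)
      have h2 := hys (n+1)
      rw [hagree (n+1) le_rfl] at h1
      have hn0 : (0:ℝ) ≤ (n:ℝ) := Nat.cast_nonneg n
      push_cast
      nlinarith [mul_nonneg (le_of_lt hδ') hn0]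
  -- disagreement exists
  have hdis : ∃ n, dg (x n) ≠ dg' (y n) := by
    by_contra hcon
    push_neg at hcon
    obtain ⟨N, hN⟩ := exists_nat_gt ((1:ℝ) / (α' - α))
    have hC := claimC N (fun m _ => hcon m)
    have h1 : y (N+1) - x (N+1) ≤ 1 := by
      have := (hy (N+1)).2; have := (hx (N+1)).1; linarith
    have h2 : (1:ℝ) < (α' - α) * N := by
      rw [div_lt_iff₀ hδ'] at hN; linarith [hN]
    linarith
  classical
  let n₀ := Nat.find hdis
  have hne : dg (x n₀) ≠ dg' (y n₀) := Nat.find_spec hdis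
  have hmin : ∀ m < n₀, dg (x m) = dg' (y m) := by
    intro m hm
    by_contra h
    exact absurd (Nat.find_le h) (not_le.mpr hm)
  have hn₀pos : n₀ ≠ 0 := by
    intro h
    rw [h] at hne
    exact hne h0
  obtain ⟨k, hk⟩ : ∃ k, n₀ = k + 1 := ⟨n₀ - 1, (Nat.succ_pred_eq_of_ne_zero hn₀pos).symm⟩
  have hxy : x n₀ ≤ y n₀ := by
    have := claimC k (fun m hm => hmin m (by omega))
    have : (0:ℝ) ≤ y (k+1) - x (k+1) := by
      have hn0 : (0:ℝ) ≤ (k:ℝ) := Nat.cast_nonneg k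
      nlinarith [mul_nonneg (le_of_lt hδ') hn0]
    rw [hk]; linarith
  rcases Bool.eq_false_or_eq_true (dg (x n₀)) with h | h
  · have h' : dg' (y n₀) = false := by
      rcases Bool.eq_false_or_eq_true (dg' (y n₀)) with h'' | h''
      · rw [h, h''] at hne; simp at hne
      · exact h''
    exact absurd (hcross _ _ hxy h h') (fun f => f)
  · have h' : dg' (y n₀) = true := by
      rcases Bool.eq_false_or_eq_true (dg' (y n₀)) with h'' | h''
      · exact h''
      · rw [h, h''] at hne; simp at hne
    exact ⟨n₀, hmin, h, h'⟩

lemma step_neg (β α : ℝ) (hβ : β ∈ Set.Ioo (1:ℝ) 2) (hα : α ∈ Set.Ioo (0:ℝ) (2 - β)) :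
    ∀ x ∈ Set.Icc (0:ℝ) 1, Tneg β α x ∈ Set.Icc (0:ℝ) 1 ∧
      Tneg β α x = β * x + α - bv (if x ≤ (1 - α) / β then false else true) := by
  obtain ⟨hβ1, hβ2⟩ := hβ
  obtain ⟨hα1, hα2⟩ := hα
  have hβ0 : (0:ℝ) < β := by linarith
  intro x hx
  obtain ⟨hx0, hx1⟩ := hx
  rcases eq_or_ne x ((1 - α) / β) with hxc | hxc
  · have hv : β * x + α = 1 := by rw [hxc]; field_simp; ring
    have : Tneg β α x = 1 := by rw [Tneg, if_pos hxc]
    rw [this]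
    refine ⟨⟨by norm_num, le_rfl⟩, ?_⟩
    rw [if_pos (le_of_eq hxc), bv]
    simp [hv]
  · have hT : Tneg β α x = Int.fract (β * x + α) := by rw [Tneg, if_neg hxc]
    have hmem : Tneg β α x ∈ Set.Icc (0:ℝ) 1 := by
      rw [hT]
      exact ⟨Int.fract_nonneg _, le_of_lt (Int.fract_lt_one _)⟩
    refine ⟨hmem, ?_⟩
    rcases lt_or_gt_of_ne hxc with hlt | hgt
    · have h1 : β * x + α < 1 := by
        have := (mul_lt_mul_iff_right₀ hβ0).mpr hlt
        rw [mul_div_cancel₀ _ (ne_of_gt hβ0)] at this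
        linarith
      have h0 : 0 ≤ β * x + α := by nlinarith
      rw [hT, Int.fract_eq_self.mpr ⟨h0, h1⟩, if_pos (le_of_lt hlt), bv]
      simp
    · have h1 : 1 < β * x + α := by
        have := (mul_lt_mul_iff_right₀ hβ0).mpr hgt
        rw [mul_div_cancel₀ _ (ne_of_gt hβ0)] at this
        linarith
      have h2 : β * x + α < 2 := by nlinarith
      have hfr : Int.fract (β * x + α) = β * x + α - 1 := by
        have h := Int.fract_add_one (β * x + α - 1)
        rw [show β * x + α - 1 + 1 = β * x + α from by ring] at h
        rw [h]
        exact Int.fract_eq_self.mpr ⟨by linarith, by linarith⟩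
      rw [hT, hfr, if_neg (not_le.mpr hgt), bv]
      simp

lemma step_pos (β α : ℝ) (hβ : β ∈ Set.Ioo (1:ℝ) 2) (hα : α ∈ Set.Ioo (0:ℝ) (2 - β)) :
    ∀ x ∈ Set.Icc (0:ℝ) 1, Tpos β α x ∈ Set.Icc (0:ℝ) 1 ∧
      Tpos β α x = β * x + α - bv (if x < (1 - α) / β then false else true) := by
  obtain ⟨hβ1, hβ2⟩ := hβ
  obtain ⟨hα1, hα2⟩ := hα
  have hβ0 : (0:ℝ) < β := by linarith
  intro x hx
  obtain ⟨hx0, hx1⟩ := hx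
  rcases eq_or_ne x ((1 - α) / β) with hxc | hxc
  · have hv : β * x + α = 1 := by rw [hxc]; field_simp; ring
    have hTv : Tpos β α x = 0 := by rw [Tpos, if_pos hxc]
    rw [hTv]
    refine ⟨⟨le_rfl, by norm_num⟩, ?_⟩
    rw [if_neg (not_lt.mpr (le_of_eq hxc.symm)), bv]
    simp [hv]
  · have hT : Tpos β α x = Int.fract (β * x + α) := by rw [Tpos, if_neg hxc]
    have hmem : Tpos β α x ∈ Set.Icc (0:ℝ) 1 := by
      rw [hT]
      exact ⟨Int.fract_nonneg _, le_of_lt (Int.fract_lt_one _)⟩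
    refine ⟨hmem, ?_⟩
    rcases lt_or_gt_of_ne hxc with hlt | hgt
    · have h1 : β * x + α < 1 := by
        have := (mul_lt_mul_iff_right₀ hβ0).mpr hlt
        rw [mul_div_cancel₀ _ (ne_of_gt hβ0)] at this
        linarith
      have h0 : 0 ≤ β * x + α := by nlinarith
      rw [hT, Int.fract_eq_self.mpr ⟨h0, h1⟩, if_pos hlt, bv]
      simp
    · have h1 : 1 < β * x + α := by
        have := (mul_lt_mul_iff_right₀ hβ0).mpr hgt
        rw [mul_div_cancel₀ _ (ne_of_gt hβ0)] at this
        linarith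
      have h2 : β * x + α < 2 := by nlinarith
      have hfr : Int.fract (β * x + α) = β * x + α - 1 := by
        have h := Int.fract_add_one (β * x + α - 1)
        rw [show β * x + α - 1 + 1 = β * x + α from by ring] at h
        rw [h]
        exact Int.fract_eq_self.mpr ⟨by linarith, by linarith⟩
      rw [hT, hfr, if_neg (not_lt.mpr (le_of_lt hgt)), bv]
      simp

lemma c_mem (β α : ℝ) (hβ : β ∈ Set.Ioo (1:ℝ) 2) (hα : α ∈ Set.Ioo (0:ℝ) (2 - β)) :
    (1 - α) / β ∈ Set.Icc (0:ℝ) 1 := by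
  obtain ⟨hβ1, hβ2⟩ := hβ
  obtain ⟨hα1, hα2⟩ := hα
  have hβ0 : (0:ℝ) < β := by linarith
  constructor
  · apply div_nonneg _ (le_of_lt hβ0); linarith
  · rw [div_le_one hβ0]; linarith

lemma cc' (β α α' : ℝ) (hβ0 : (0:ℝ) < β) :
    β * ((1 - α) / β) + α = β * ((1 - α') / β) + α' := by
  field_simp; ring

lemma kMinus_mono (β α α' : ℝ) (hβ : β ∈ Set.Ioo (1:ℝ) 2)
    (hα : α ∈ Set.Ioo (0:ℝ) (2 - β)) (hα' : α' ∈ Set.Ioo (0:ℝ) (2 - β))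
    (h : α < α') : lexLt (kMinus β α) (kMinus β α') := by
  have hβ0 : (0:ℝ) < β := by linarith [hβ.1]
  have hc'c : (1 - α') / β < (1 - α) / β :=
    (div_lt_div_iff_of_pos_right hβ0).mpr (by linarith)
  have key := lex_aux β α α' ((1 - α) / β) ((1 - α') / β) (Tneg β α) (Tneg β α')
    (fun z => if z ≤ (1 - α) / β then false else true)
    (fun z => if z ≤ (1 - α') / β then false else true)
    (le_of_lt hβ.1) (c_mem β α hβ hα) (c_mem β α' hβ hα')
    (cc' β α α' hβ0) h (step_neg β α hβ hα) (step_neg β α' hβ hα')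
    (by simp) ?_
  · exact key
  · intro z w hzw h1 h2
    have h1' : (if z ≤ (1 - α) / β then false else true) = true := h1
    have h2' : (if w ≤ (1 - α') / β then false else true) = false := h2
    have hz : ¬ (z ≤ (1 - α) / β) := by
      intro hh; rw [if_pos hh] at h1'; exact absurd h1' (by simp)
    have hw : w ≤ (1 - α') / β := by
      by_contra hh; rw [if_neg hh] at h2'; exact absurd h2' (by simp)
    push_neg at hz; linarith

lemma kPlus_mono (β α α' : ℝ) (hβ : β ∈ Set.Ioo (1:ℝ) 2)
    (hα : α ∈ Set.Ioo (0:ℝ) (2 - β)) (hα' : α' ∈ Set.Ioo (0:ℝ) (2 - β))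
    (h : α < α') : lexLt (kPlus β α) (kPlus β α') := by
  have hβ0 : (0:ℝ) < β := by linarith [hβ.1]
  have hc'c : (1 - α') / β < (1 - α) / β :=
    (div_lt_div_iff_of_pos_right hβ0).mpr (by linarith)
  exact lex_aux β α α' ((1 - α) / β) ((1 - α') / β) (Tpos β α) (Tpos β α')
    (fun z => if z < (1 - α) / β then false else true)
    (fun z => if z < (1 - α') / β then false else true)
    (le_of_lt hβ.1) (c_mem β α hβ hα) (c_mem β α' hβ hα')
    (cc' β α α' hβ0) h (step_pos β α hβ hα) (step_pos β α' hβ hα')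
    (by simp) (by
      intro z w hzw h1 h2
      have h1' : (if z < (1 - α) / β then false else true) = true := h1
      have h2' : (if w < (1 - α') / β then false else true) = false := h2
      have hz : ¬ (z < (1 - α) / β) := by
        intro hh; rw [if_pos hh] at h1'; exact absurd h1' (by simp)
      have hw : w < (1 - α') / β := by
        by_contra hh; rw [if_neg hh] at h2'; exact absurd h2' (by simp)
      push_neg at hz; linarith)

theorem kneading_monotone_iff (β α α' : ℝ)
    (hβ : β ∈ Set.Ioo (1 : ℝ) 2)
    (hα : α ∈ Set.Ioo (0 : ℝ) (2 - β)) (hα' : α' ∈ Set.Ioo (0 : ℝ) (2 - β)) :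
    (lexLt (kMinus β α) (kMinus β α') ∧ lexLt (kMinus β α') (kPlus β α) ∧
      lexLt (kPlus β α) (kPlus β α')) ↔ α < α' := by
  constructor
  · rintro ⟨-, -, h3⟩
    rcases lt_trichotomy α α' with h | h | h
    · exact h
    · subst h; exact absurd h3 (lexLt_irrefl _)
    · exact absurd h3 (fun hh => lexLt_asymm hh (kPlus_mono β α' α hβ hα' hα h))
  · intro h
    refine ⟨kMinus_mono β α α' hβ hα hα' h, ?_, kPlus_mono β α α' hβ hα hα' h⟩
    exact ⟨0, fun m hm => absurd hm (Nat.not_lt_zero m), by simp [kMinus, tauNeg],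
      by simp [kPlus, tauPos]⟩
end
end

section
/- Let (β,α) ∈ Δ with kneading invariants k₊ and k₋, and for i ≥ 1 write a_i and b_i for the i-th entries of k₊ and k₋. If (T⁺_{β,α})^{m−1}(0) = (T⁻_{β,α})^{m−1}(1) for some integer m ≥ 2, then β^{m−1} − β^{m−2} + Σ_{i=3}^{m} (a_i − b_i)·β^{m−i} = 0. In particular, β is an algebraic integer (a root of a monic integer polynomial all of whose coefficients lie in {−1,0,1}). -/
noncomputable section

theorem matching_polynomial_vanishes (β α : ℝ)
    (hβ : β ∈ Set.Ioo (1 : ℝ) 2) (hα : α ∈ Set.Ioo (0 : ℝ) (2 - β))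
    (m : ℕ) (hm : 2 ≤ m)
    (hmatch : (Tpos β α)^[m - 1] 0 = (Tneg β α)^[m - 1] 1) :
    β ^ (m - 1) - β ^ (m - 2) +
        (∑ i ∈ Finset.Icc 3 m,
          ((if kPlus β α (i - 1) then (1 : ℝ) else 0) -
            (if kMinus β α (i - 1) then (1 : ℝ) else 0)) * β ^ (m - i)) = 0 ∧
    ∃ p : Polynomial ℤ, p.Monic ∧
      (∀ i : ℕ, p.coeff i = -1 ∨ p.coeff i = 0 ∨ p.coeff i = 1) ∧
      Polynomial.aeval β p = 0 := by
  obtain ⟨hβ1, hβ2⟩ := hβ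
  obtain ⟨hα0, hα2⟩ := hα
  have hβ0 : (0:ℝ) < β := by linarith
  set c := (1 - α) / β with hc
  have hβc : β * c = 1 - α := by rw [hc]; field_simp
  have hc0 : 0 < c := div_pos (by linarith) hβ0
  have hc1 : c < 1 := by rw [hc, div_lt_one hβ0]; linarith
  -- one step of Tpos
  have stepP : ∀ x : ℝ, 0 ≤ x → x < 1 →
      Tpos β α x = β * x + α - (if x < c then 0 else 1) ∧
      0 ≤ Tpos β α x ∧ Tpos β α x < 1 := by
    intro x hx0 hx1
    by_cases hxc : x = c
    · subst hxc
      rw [Tpos, if_pos hc.symm, if_neg (lt_irrefl c)]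
      refine ⟨by linarith, le_refl _, one_pos⟩
    · have hxc' : ¬ x = (1 - α) / β := by rw [← hc]; exact hxc
      rw [Tpos, if_neg hxc']
      rcases lt_or_gt_of_ne hxc with hlt | hgt
      · have hb : β * x < 1 - α := by
          calc β * x < β * c := by exact mul_lt_mul_of_pos_left hlt hβ0
          _ = 1 - α := hβc
        have hfr : Int.fract (β * x + α) = β * x + α :=
          Int.fract_eq_self.mpr ⟨by nlinarith, by linarith⟩
        rw [hfr, if_pos hlt]
        refine ⟨by ring, by nlinarith, by linarith⟩
      · have hb : 1 - α < β * x := by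
          calc (1 - α) = β * c := hβc.symm
          _ < β * x := mul_lt_mul_of_pos_left hgt hβ0
        have hb2 : β * x + α < 2 := by nlinarith
        have hfr : Int.fract (β * x + α) = β * x + α - 1 := by
          have h1 := Int.fract_add_intCast (β * x + α - 1) 1
          push_cast at h1
          rw [show β * x + α - 1 + 1 = β * x + α by ring] at h1
          rw [h1, Int.fract_eq_self.mpr ⟨by linarith, by linarith⟩]
        rw [hfr, if_neg (not_lt.mpr hgt.le)]
        refine ⟨by ring, by linarith, by linarith⟩
  -- one step of Tneg
  have stepN : ∀ x : ℝ, 0 ≤ x → x ≤ 1 →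
      Tneg β α x = β * x + α - (if x ≤ c then 0 else 1) ∧
      0 ≤ Tneg β α x ∧ Tneg β α x ≤ 1 := by
    intro x hx0 hx1
    by_cases hxc : x = c
    · subst hxc
      rw [Tneg, if_pos hc.symm, if_pos (le_refl c)]
      refine ⟨by linarith, by linarith, le_refl _⟩
    · have hxc' : ¬ x = (1 - α) / β := by rw [← hc]; exact hxc
      rw [Tneg, if_neg hxc']
      rcases lt_or_gt_of_ne hxc with hlt | hgt
      · have hb : β * x < 1 - α := by
          calc β * x < β * c := mul_lt_mul_of_pos_left hlt hβ0
          _ = 1 - α := hβc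
        have hfr : Int.fract (β * x + α) = β * x + α :=
          Int.fract_eq_self.mpr ⟨by nlinarith, by linarith⟩
        rw [hfr, if_pos hlt.le]
        refine ⟨by ring, by nlinarith, by linarith⟩
      · have hb : 1 - α < β * x := by
          calc (1 - α) = β * c := hβc.symm
          _ < β * x := mul_lt_mul_of_pos_left hgt hβ0
        have hb2 : β * x + α < 2 := by nlinarith
        have hfr : Int.fract (β * x + α) = β * x + α - 1 := by
          have h1 := Int.fract_add_intCast (β * x + α - 1) 1
          push_cast at h1
          rw [show β * x + α - 1 + 1 = β * x + α by ring] at h1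
          rw [h1, Int.fract_eq_self.mpr ⟨by linarith, by linarith⟩]
        rw [hfr, if_neg (not_le.mpr hgt)]
        refine ⟨by ring, by linarith, by linarith⟩
  -- orbit bounds
  have boundsP : ∀ n : ℕ, 0 ≤ (Tpos β α)^[n] c ∧ (Tpos β α)^[n] c < 1 := by
    intro n
    induction n with
    | zero => exact ⟨hc0.le, hc1⟩
    | succ n ih =>
      rw [Function.iterate_succ_apply']
      exact (stepP _ ih.1 ih.2).2
  have boundsN : ∀ n : ℕ, 0 ≤ (Tneg β α)^[n] c ∧ (Tneg β α)^[n] c ≤ 1 := by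
    intro n
    induction n with
    | zero => exact ⟨hc0.le, hc1.le⟩
    | succ n ih =>
      rw [Function.iterate_succ_apply']
      exact (stepN _ ih.1 ih.2).2
  -- digits
  have digitP : ∀ n : ℕ, (if kPlus β α n then (1:ℝ) else 0)
      = (if (Tpos β α)^[n] c < c then 0 else 1) := by
    intro n
    by_cases h : (Tpos β α)^[n] c < c <;> simp [kPlus, tauPos, ← hc, h]
  have digitN : ∀ n : ℕ, (if kMinus β α n then (1:ℝ) else 0)
      = (if (Tneg β α)^[n] c ≤ c then 0 else 1) := by
    intro n
    by_cases h : (Tneg β α)^[n] c ≤ c <;> simp [kMinus, tauNeg, ← hc, h]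
  -- recursion
  have recP : ∀ n : ℕ, (Tpos β α)^[n+1] c
      = β * (Tpos β α)^[n] c + α - (if kPlus β α n then (1:ℝ) else 0) := by
    intro n
    rw [Function.iterate_succ_apply', digitP n]
    exact (stepP _ (boundsP n).1 (boundsP n).2).1
  have recN : ∀ n : ℕ, (Tneg β α)^[n+1] c
      = β * (Tneg β α)^[n] c + α - (if kMinus β α n then (1:ℝ) else 0) := by
    intro n
    rw [Function.iterate_succ_apply', digitN n]
    exact (stepN _ (boundsN n).1 (boundsN n).2).1
  -- the key formula
  have hy1 : Tpos β α c = 0 := by rw [Tpos, if_pos hc.symm]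
  have hz1 : Tneg β α c = 1 := by rw [Tneg, if_pos hc.symm]
  have key : ∀ n : ℕ, 1 ≤ n →
      (Tneg β α)^[n] c - (Tpos β α)^[n] c =
        β ^ (n-1) + ∑ j ∈ Finset.Icc 2 n,
          ((if kPlus β α (j-1) then (1:ℝ) else 0) -
            (if kMinus β α (j-1) then (1:ℝ) else 0)) * β ^ (n-j) := by
    intro n hn
    induction n, hn using Nat.le_induction with
    | base =>
      rw [Function.iterate_one, Function.iterate_one, hy1, hz1]
      norm_num [Finset.Icc_eq_empty (show ¬(2:ℕ) ≤ 1 by omega)]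
    | succ n hn ih =>
      have expand : (Tneg β α)^[n+1] c - (Tpos β α)^[n+1] c
          = β * ((Tneg β α)^[n] c - (Tpos β α)^[n] c)
            + ((if kPlus β α n then (1:ℝ) else 0) -
               (if kMinus β α n then (1:ℝ) else 0)) := by
        rw [recP n, recN n]; ring
      rw [expand, ih]
      rw [← Finset.insert_Icc_right_eq_Icc_add_one (by omega : 2 ≤ n+1),
        Finset.sum_insert (by simp)]
      have e1 : β * β ^ (n-1) = β ^ n := by
        rw [← pow_succ']
        congr 1
        omega
      have e2 : ∀ j ∈ Finset.Icc 2 n,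
          ((if kPlus β α (j-1) then (1:ℝ) else 0) -
            (if kMinus β α (j-1) then (1:ℝ) else 0)) * β ^ (n+1-j)
          = β * (((if kPlus β α (j-1) then (1:ℝ) else 0) -
            (if kMinus β α (j-1) then (1:ℝ) else 0)) * β ^ (n-j)) := by
        intro j hj
        simp only [Finset.mem_Icc] at hj
        rw [show n+1-j = (n-j)+1 by omega, pow_succ]
        ring
      rw [mul_add, Finset.mul_sum, ← Finset.sum_congr rfl e2, e1]
      simp only [Nat.add_sub_cancel, Nat.sub_self, pow_zero, mul_one]
      ring
  -- matching gives vanishing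
  have hym : (Tpos β α)^[m] c = (Tpos β α)^[m-1] 0 := by
    conv_lhs => rw [show m = (m-1)+1 by omega]
    rw [Function.iterate_succ_apply, Tpos, if_pos hc.symm]
  have hzm : (Tneg β α)^[m] c = (Tneg β α)^[m-1] 1 := by
    conv_lhs => rw [show m = (m-1)+1 by omega]
    rw [Function.iterate_succ_apply, Tneg, if_pos hc.symm]
  have hzero : (Tneg β α)^[m] c - (Tpos β α)^[m] c = 0 := by
    rw [hym, hzm, hmatch]; ring
  have hsplit : Finset.Icc 2 m = insert 2 (Finset.Icc 3 m) := by
    rw [show (3:ℕ) = 2+1 from rfl, ← Finset.insert_Icc_add_one_left_eq_Icc (by omega : 2 ≤ m)]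
  have hk1 : kPlus β α 1 = false := by
    simp [kPlus, tauPos, ← hc, hy1, hc0]
  have hk2 : kMinus β α 1 = true := by
    simp [kMinus, tauNeg, ← hc, hz1, not_le.mpr hc1]
  have keym := key m (by omega)
  rw [hzero, hsplit, Finset.sum_insert (by simp)] at keym
  rw [show (2:ℕ)-1 = 1 from rfl, hk1, hk2] at keym
  simp only [Bool.false_eq_true, if_false, if_true] at keym
  have first : β ^ (m - 1) - β ^ (m - 2) +
      (∑ i ∈ Finset.Icc 3 m,
        ((if kPlus β α (i - 1) then (1 : ℝ) else 0) -
          (if kMinus β α (i - 1) then (1 : ℝ) else 0)) * β ^ (m - i)) = 0 := by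
    linarith [keym]
  refine ⟨first, ?_⟩
  -- the polynomial
  set D : ℕ → ℤ := fun j =>
    (if kPlus β α (j-1) then 1 else 0) - (if kMinus β α (j-1) then 1 else 0) with hD
  refine ⟨Polynomial.X^(m-1) + (Polynomial.C (-1) * Polynomial.X^(m-2) + ∑ j ∈ Finset.Icc 3 m, Polynomial.C (D j) * Polynomial.X^(m-j)),
    ?_, ?_, ?_⟩
  · apply Polynomial.monic_X_pow_add
    apply lt_of_le_of_lt (Polynomial.degree_add_le _ _)
    rw [max_lt_iff]
    constructor
    · refine lt_of_le_of_lt (Polynomial.degree_C_mul_X_pow_le _ _) ?_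
      exact_mod_cast (by omega : m-2 < m-1)
    · refine lt_of_le_of_lt (Polynomial.degree_sum_le _ _) ?_
      rw [Finset.sup_lt_iff (by exact WithBot.bot_lt_coe _)]
      intro j hj
      simp only [Finset.mem_Icc] at hj
      refine lt_of_le_of_lt (Polynomial.degree_C_mul_X_pow_le _ _) ?_
      exact_mod_cast (by omega : m-j < m-1)
  · intro k
    have hDrange : ∀ j, D j = -1 ∨ D j = 0 ∨ D j = 1 := by
      intro j
      rcases h1 : kPlus β α (j-1) <;> rcases h2 : kMinus β α (j-1) <;>
        simp [hD, h1, h2]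
    have hcoeff : (Polynomial.X^(m-1) + (Polynomial.C (-1) * Polynomial.X^(m-2) +
        ∑ j ∈ Finset.Icc 3 m, Polynomial.C (D j) * Polynomial.X^(m-j)) : Polynomial ℤ).coeff k
        = (if k = m-1 then 1 else 0) + ((-1) * (if k = m-2 then 1 else 0)
          + ∑ j ∈ Finset.Icc 3 m, (if k = m - j then D j else 0)) := by
      rw [Polynomial.coeff_add, Polynomial.coeff_add, Polynomial.coeff_C_mul,
        Polynomial.coeff_X_pow, Polynomial.coeff_X_pow, Polynomial.finset_sum_coeff]
      congr 1
      congr 1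
      exact Finset.sum_congr rfl fun j _ => by
        rw [Polynomial.coeff_C_mul, Polynomial.coeff_X_pow, mul_ite, mul_one, mul_zero]
    rw [hcoeff]
    by_cases h1 : k = m-1
    · have hs : (∑ j ∈ Finset.Icc 3 m, (if k = m - j then D j else 0)) = 0 := by
        apply Finset.sum_eq_zero
        intro j hj
        simp only [Finset.mem_Icc] at hj
        rw [if_neg (by omega)]
      rw [hs, if_pos h1, if_neg (by omega)]
      right; right; ring
    · by_cases h2 : k = m-2
      · have hs : (∑ j ∈ Finset.Icc 3 m, (if k = m - j then D j else 0)) = 0 := by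
          apply Finset.sum_eq_zero
          intro j hj
          simp only [Finset.mem_Icc] at hj
          rw [if_neg (by omega)]
        rw [hs, if_neg h1, if_pos h2]
        left; ring
      · rw [if_neg h1, if_neg h2]
        by_cases hex : ∃ j ∈ Finset.Icc 3 m, k = m - j
        · obtain ⟨j₀, hj₀, hk⟩ := hex
          have hs : (∑ j ∈ Finset.Icc 3 m, (if k = m - j then D j else 0)) = D j₀ := by
            rw [Finset.sum_eq_single j₀]
            · rw [if_pos hk]
            · intro j hj hne
              simp only [Finset.mem_Icc] at hj
              have hj₀' := hj₀
              simp only [Finset.mem_Icc] at hj₀'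
              rw [if_neg (by omega)]
            · intro h; exact absurd hj₀ h
          rw [hs]
          rcases hDrange j₀ with h | h | h <;> rw [h] <;> simp
        · push_neg at hex
          have hs : (∑ j ∈ Finset.Icc 3 m, (if k = m - j then D j else 0)) = 0 := by
            apply Finset.sum_eq_zero
            intro j hj
            rw [if_neg (hex j hj)]
          rw [hs]; right; left; ring
  · have hcast : ∀ j, (algebraMap ℤ ℝ) (D j)
        = (if kPlus β α (j-1) then (1:ℝ) else 0) -
          (if kMinus β α (j-1) then (1:ℝ) else 0) := by
      intro j
      simp [hD, apply_ite (Int.cast : ℤ → ℝ)]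
    simp only [map_add, map_mul, map_pow, map_sum, Polynomial.aeval_X,
      Polynomial.aeval_C, map_neg, map_one]
    have hsum : (∑ j ∈ Finset.Icc 3 m, (algebraMap ℤ ℝ) (D j) * β ^ (m-j))
        = ∑ j ∈ Finset.Icc 3 m,
          ((if kPlus β α (j-1) then (1:ℝ) else 0) -
            (if kMinus β α (j-1) then (1:ℝ) else 0)) * β ^ (m-j) :=
      Finset.sum_congr rfl fun j _ => by rw [hcast]
    rw [hsum]
    linarith [first]
end
end

section
/- If (β,α) ∈ Δ and Ω_{β,α} is a subshift of finite type, then α belongs to ℚ(β), the smallest subfield of ℝ containing β. Consequently, for each fixed β ∈ (1,2), the set {α ∈ (0,2−β) : Ω_{β,α} is a subshift of finite type} is countable. -/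
noncomputable section

namespace SFTAux

/-- bit (digit) function for `Tpos`. -/
def bp (β α z : ℝ) : Bool := if z < (1 - α) / β then false else true

/-- bit (digit) function for `Tneg`. -/
def bn (β α z : ℝ) : Bool := if z ≤ (1 - α) / β then false else true

variable {β α : ℝ}

lemma bp_true_iff (z : ℝ) : bp β α z = true ↔ ¬ z < (1 - α) / β := by
  unfold bp; split <;> simp [*]

lemma bn_true_iff (z : ℝ) : bn β α z = true ↔ ¬ z ≤ (1 - α) / β := by
  unfold bn; split <;> simp [*]

lemma step_pos (hβ1 : 1 < β) (hβ2 : β < 2) (hα0 : 0 < α) (hα2 : α < 2 - β)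
    {x : ℝ} (hx : x ∈ Set.Icc (0:ℝ) 1) :
    Tpos β α x ∈ Set.Icc (0:ℝ) 1 ∧
      Tpos β α x = β * x + α - (cond (bp β α x) 1 0) := by
  have hβ0 : (0:ℝ) < β := by linarith
  have hcβ : β * ((1 - α) / β) = 1 - α := by field_simp
  rcases eq_or_ne x ((1 - α) / β) with h | h
  · have hbp : bp β α x = true := by rw [bp_true_iff, h]; exact lt_irrefl _
    have hT : Tpos β α x = 0 := if_pos h
    constructor
    · rw [hT]; exact ⟨le_refl _, by norm_num⟩
    · rw [hT, hbp, h]; simp; linarith [hcβ]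
  · have hT : Tpos β α x = Int.fract (β * x + α) := if_neg h
    rcases lt_or_gt_of_ne h with hlt | hgt
    · have h0 : 0 ≤ β * x + α := by nlinarith [hx.1]
      have h1 : β * x + α < 1 := by nlinarith [mul_lt_mul_of_pos_left hlt hβ0]
      have hf : Int.fract (β * x + α) = β * x + α := Int.fract_eq_self.mpr ⟨h0, h1⟩
      have hbp : bp β α x = false := by unfold bp; rw [if_pos hlt]
      constructor
      · rw [hT, hf]; exact ⟨h0, le_of_lt h1⟩
      · rw [hT, hf, hbp]; simp
    · have h1 : 1 < β * x + α := by nlinarith [mul_lt_mul_of_pos_left hgt hβ0]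
      have h2 : β * x + α < 2 := by nlinarith [hx.2]
      have hfs : Int.fract (β * x + α - 1) = β * x + α - 1 :=
        Int.fract_eq_self.mpr ⟨by linarith, by linarith⟩
      have hf : Int.fract (β * x + α) = β * x + α - 1 := by
        have h3 := Int.fract_sub_intCast (β * x + α) (1:ℤ)
        push_cast at h3
        rw [hfs] at h3
        exact h3.symm
      have hbp : bp β α x = true := by rw [bp_true_iff]; exact not_lt.mpr (le_of_lt hgt)
      constructor
      · rw [hT, hf]; exact ⟨by linarith, by linarith⟩
      · rw [hT, hf, hbp]; simp
  
lemma step_neg (hβ1 : 1 < β) (hβ2 : β < 2) (hα0 : 0 < α) (hα2 : α < 2 - β)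
    {x : ℝ} (hx : x ∈ Set.Icc (0:ℝ) 1) :
    Tneg β α x ∈ Set.Icc (0:ℝ) 1 ∧
      Tneg β α x = β * x + α - (cond (bn β α x) 1 0) := by
  have hβ0 : (0:ℝ) < β := by linarith
  have hcβ : β * ((1 - α) / β) = 1 - α := by field_simp
  rcases eq_or_ne x ((1 - α) / β) with h | h
  · have hbn : bn β α x = false := by unfold bn; rw [if_pos (le_of_eq h)]
    have hT : Tneg β α x = 1 := if_pos h
    constructor
    · rw [hT]; exact ⟨by norm_num, le_refl _⟩
    · rw [hT, hbn, h]; simp; linarith [hcβ]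
  · have hT : Tneg β α x = Int.fract (β * x + α) := if_neg h
    rcases lt_or_gt_of_ne h with hlt | hgt
    · have h0 : 0 ≤ β * x + α := by nlinarith [hx.1]
      have h1 : β * x + α < 1 := by nlinarith [mul_lt_mul_of_pos_left hlt hβ0]
      have hf : Int.fract (β * x + α) = β * x + α := Int.fract_eq_self.mpr ⟨h0, h1⟩
      have hbn : bn β α x = false := by unfold bn; rw [if_pos (le_of_lt hlt)]
      constructor
      · rw [hT, hf]; exact ⟨h0, le_of_lt h1⟩
      · rw [hT, hf, hbn]; simp
    · have h1 : 1 < β * x + α := by nlinarith [mul_lt_mul_of_pos_left hgt hβ0]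
      have h2 : β * x + α < 2 := by nlinarith [hx.2]
      have hfs : Int.fract (β * x + α - 1) = β * x + α - 1 :=
        Int.fract_eq_self.mpr ⟨by linarith, by linarith⟩
      have hf : Int.fract (β * x + α) = β * x + α - 1 := by
        have h3 := Int.fract_sub_intCast (β * x + α) (1:ℤ)
        push_cast at h3
        rw [hfs] at h3
        exact h3.symm
      have hbn : bn β α x = true := by rw [bn_true_iff]; exact not_le.mpr hgt
      constructor
      · rw [hT, hf]; exact ⟨by linarith, by linarith⟩
      · rw [hT, hf, hbn]; simp

end SFTAux

namespace SFTAux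

variable {β α : ℝ}

lemma lexLt_asymm {a b : ℕ → Bool} (h1 : lexLt a b) (h2 : lexLt b a) : False := by
  obtain ⟨n1, hA, ha1, hb1⟩ := h1
  obtain ⟨n2, hB, hb2, ha2⟩ := h2
  rcases lt_trichotomy n1 n2 with h | h | h
  · have := hB n1 h; rw [ha1, hb1] at this; simp at this
  · subst h; rw [ha1] at ha2; simp at ha2
  · have := hA n2 h; rw [ha2, hb2] at this; simp at this

lemma compare_aux (hβ1 : 1 < β) (T₁ T₂ : ℝ → ℝ) (b₁ b₂ : ℝ → Bool)
    (h₁ : ∀ x ∈ Set.Icc (0:ℝ) 1, T₁ x ∈ Set.Icc (0:ℝ) 1 ∧ T₁ x = β * x + α - (cond (b₁ x) 1 0))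
    (h₂ : ∀ x ∈ Set.Icc (0:ℝ) 1, T₂ x ∈ Set.Icc (0:ℝ) 1 ∧ T₂ x = β * x + α - (cond (b₂ x) 1 0))
    (hcross : ∀ z w : ℝ, z ≤ w → b₁ z = true → b₂ w = true)
    {x y : ℝ} (hx : x ∈ Set.Icc (0:ℝ) 1) (hy : y ∈ Set.Icc (0:ℝ) 1) (hxy : x ≤ y) :
    (fun n => b₁ (T₁^[n] x)) = (fun n => b₂ (T₂^[n] y)) ∨
      lexLt (fun n => b₁ (T₁^[n] x)) (fun n => b₂ (T₂^[n] y)) := by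
  classical
  have hx' : ∀ k, T₁^[k] x ∈ Set.Icc (0:ℝ) 1 := by
    intro k; induction k with
    | zero => simpa
    | succ k ih => rw [Function.iterate_succ_apply']; exact (h₁ _ ih).1
  have hy' : ∀ k, T₂^[k] y ∈ Set.Icc (0:ℝ) 1 := by
    intro k; induction k with
    | zero => simpa
    | succ k ih => rw [Function.iterate_succ_apply']; exact (h₂ _ ih).1
  by_cases heq : (fun n => b₁ (T₁^[n] x)) = (fun n => b₂ (T₂^[n] y))
  · exact Or.inl heq
  right
  have hne : ∃ n, b₁ (T₁^[n] x) ≠ b₂ (T₂^[n] y) := by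
    by_contra h
    push_neg at h
    exact heq (funext fun n => h n)
  set n := Nat.find hne with hn_def
  have hn : b₁ (T₁^[n] x) ≠ b₂ (T₂^[n] y) := Nat.find_spec hne
  have hmin : ∀ m, m < n → b₁ (T₁^[m] x) = b₂ (T₂^[m] y) := by
    intro m hm
    have := Nat.find_min hne hm
    simpa using this
  have key : ∀ k, k ≤ n → T₂^[k] y - T₁^[k] x = β ^ k * (y - x) := by
    intro k
    induction k with
    | zero => intro _; simp
    | succ k ih =>
      intro hk
      have hkn : k < n := Nat.lt_of_succ_le hk
      have ihh := ih (le_of_lt hkn)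
      rw [Function.iterate_succ_apply', Function.iterate_succ_apply',
        (h₁ _ (hx' k)).2, (h₂ _ (hy' k)).2, hmin k hkn, pow_succ]
      ring_nf
      ring_nf at ihh
      nlinarith [ihh]
  have hle : T₁^[n] x ≤ T₂^[n] y := by
    have h1 := key n le_rfl
    have h2 : 0 ≤ β ^ n * (y - x) :=
      mul_nonneg (pow_nonneg (by linarith) n) (by linarith)
    linarith
  have hb1 : b₁ (T₁^[n] x) = false := by
    cases hb : b₁ (T₁^[n] x) with
    | false => rfl
    | true => exact absurd (hb.trans (hcross _ _ hle hb).symm) hn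
  have hb2 : b₂ (T₂^[n] y) = true := by
    cases hb : b₂ (T₂^[n] y) with
    | true => rfl
    | false => exact absurd (hb1.trans hb.symm) hn
  exact ⟨n, hmin, hb1, hb2⟩

lemma le_tauPos_one (hβ1 : 1 < β) (hβ2 : β < 2) (hα0 : 0 < α) (hα2 : α < 2 - β)
    {ω : ℕ → Bool} (hω : ω ∈ OmegaSet β α) :
    ω = tauPos β α 1 ∨ lexLt ω (tauPos β α 1) := by
  have h1 : (1:ℝ) ∈ Set.Icc (0:ℝ) 1 := ⟨by norm_num, le_refl _⟩
  rcases hω with ⟨x, hx, rfl⟩ | ⟨x, hx, rfl⟩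
  · exact compare_aux hβ1 (Tpos β α) (Tpos β α) (bp β α) (bp β α)
      (fun z hz => step_pos hβ1 hβ2 hα0 hα2 hz) (fun z hz => step_pos hβ1 hβ2 hα0 hα2 hz)
      (fun z w hzw hz => by
        rw [bp_true_iff] at hz ⊢; intro hw; exact hz (lt_of_le_of_lt hzw hw))
      hx h1 hx.2
  · exact compare_aux hβ1 (Tneg β α) (Tpos β α) (bn β α) (bp β α)
      (fun z hz => step_neg hβ1 hβ2 hα0 hα2 hz) (fun z hz => step_pos hβ1 hβ2 hα0 hα2 hz)
      (fun z w hzw hz => by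
        rw [bn_true_iff] at hz; rw [bp_true_iff]; intro hw
        exact hz (le_of_lt (lt_of_le_of_lt hzw hw)))
      hx h1 hx.2

end SFTAux

namespace SFTAux

variable {β α : ℝ}

lemma pump (hβ1 : 1 < β) (hβ2 : β < 2) (hα0 : 0 < α) (hα2 : α < 2 - β)
    (F : Finset (List Bool))
    (hF : OmegaSet β α = {ω | ∀ m n : ℕ, List.ofFn (fun i : Fin n => ω (m + i)) ∉ F})
    {N a b : ℕ} (hN : ∀ w ∈ F, w.length < N)
    (hwin : ∀ i, i < N → (tauPos β α 1) (a + i) = (tauPos β α 1) (b + i)) :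
    (fun j => (tauPos β α 1) (a + j)) = (fun j => (tauPos β α 1) (b + j)) ∨
      lexLt (fun j => (tauPos β α 1) (a + j)) (fun j => (tauPos β α 1) (b + j)) := by
  classical
  set μ : ℕ → Bool := tauPos β α 1 with hμ
  have h1mem : (1:ℝ) ∈ Set.Icc (0:ℝ) 1 := ⟨by norm_num, le_refl _⟩
  have hμΩ : μ ∈ OmegaSet β α := Or.inl ⟨1, h1mem, hμ.symm⟩
  have hμF : ∀ q l : ℕ, List.ofFn (fun i : Fin l => μ (q + i)) ∉ F := by
    rw [hF] at hμΩ; exact hμΩ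
  set ρ : ℕ → Bool := fun i => if i < b then μ i else μ (a + (i - b)) with hρ
  have hρb : ∀ j : ℕ, ρ (b + j) = μ (a + j) := by
    intro j
    have h1 : ¬ b + j < b := by omega
    have h2 : b + j - b = j := by omega
    simp only [hρ, if_neg h1, h2]
  have hagree : ∀ i, i < b + N → ρ i = μ i := by
    intro i hi
    by_cases h : i < b
    · simp [hρ, h]
    · push_neg at h
      have h1 : i - b < N := by omega
      have h2 : ρ i = μ (a + (i - b)) := by simp only [hρ, if_neg (not_lt.mpr h)]
      rw [h2, hwin _ h1]
      congr 1
      omega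
  have hρΩ : ρ ∈ OmegaSet β α := by
    rw [hF]
    intro q l
    by_cases hl : q + l ≤ b + N
    · have hlist : List.ofFn (fun i : Fin l => ρ (q + i)) =
          List.ofFn (fun i : Fin l => μ (q + i)) := by
        apply congrArg
        funext i
        exact hagree _ (by omega)
      rw [hlist]; exact hμF q l
    · push_neg at hl
      by_cases hq : b < q
      · have hlist : List.ofFn (fun i : Fin l => ρ (q + i)) =
            List.ofFn (fun i : Fin l => μ ((a + (q - b)) + i)) := by
          apply congrArg
          funext i
          have h1 : ¬ q + (i:ℕ) < b := by omega
          simp only [hρ, if_neg h1]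
          congr 1
          omega
        rw [hlist]; exact hμF _ l
      · intro hmem
        have h1 := hN _ hmem
        rw [List.length_ofFn] at h1
        omega
  rcases le_tauPos_one hβ1 hβ2 hα0 hα2 hρΩ with heq | hlt
  · left
    funext j
    show μ (a + j) = μ (b + j)
    rw [← hρb j, heq]
  · right
    obtain ⟨d, hd, hρd, hμd⟩ := hlt
    have hdb : b ≤ d := by
      by_contra h
      push_neg at h
      rw [hagree d (by omega), hμ, hμd] at hρd
      simp at hρd
    refine ⟨d - b, ?_, ?_, ?_⟩
    · intro m hm
      show μ (a + m) = μ (b + m)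
      rw [← hρb m]
      exact hd (b + m) (by omega)
    · show μ (a + (d - b)) = false
      rw [← hρb (d - b)]
      have : b + (d - b) = d := by omega
      rw [this]
      exact hρd
    · show μ (b + (d - b)) = true
      have : b + (d - b) = d := by omega
      rw [this]
      exact hμd

lemma mu_eventually_periodic (hβ1 : 1 < β) (hβ2 : β < 2) (hα0 : 0 < α) (hα2 : α < 2 - β)
    (hsft : IsSFT (OmegaSet β α)) :
    ∃ m p : ℕ, 1 ≤ p ∧ ∀ j : ℕ, (tauPos β α 1) (m + j + p) = (tauPos β α 1) (m + j) := by
  classical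
  obtain ⟨F, hF⟩ := hsft
  set μ : ℕ → Bool := tauPos β α 1 with hμ
  set N := (F.sup List.length) + 1 with hN
  have hNF : ∀ w ∈ F, w.length < N := fun w hw => Nat.lt_succ_of_le (Finset.le_sup hw)
  obtain ⟨u, v, huv, hfeq⟩ := Finite.exists_ne_map_eq_of_infinite
      (fun q : ℕ => (fun i : Fin N => μ (q + i)))
  have hwin : ∀ i, i < N → μ (u + i) = μ (v + i) := fun i hi => congrFun hfeq ⟨i, hi⟩
  have hwin' : ∀ i, i < N → μ (v + i) = μ (u + i) := fun i hi => (hwin i hi).symm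
  have htail : ∀ j, μ (u + j) = μ (v + j) := by
    rcases pump hβ1 hβ2 hα0 hα2 F hF hNF hwin with heq | hlt1
    · intro j; exact congrFun heq j
    · rcases pump hβ1 hβ2 hα0 hα2 F hF hNF hwin' with heq | hlt2
      · intro j; exact (congrFun heq j).symm
      · exact (lexLt_asymm hlt1 hlt2).elim
  rcases Nat.lt_or_ge u v with h | h
  · refine ⟨u, v - u, by omega, fun j => ?_⟩
    have e : u + j + (v - u) = v + j := by omega
    rw [e]
    exact (htail j).symm
  · have h' : v < u := by omega
    refine ⟨v, u - v, by omega, fun j => ?_⟩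
    have e : v + j + (u - v) = u + j := by omega
    rw [e]
    exact htail j

end SFTAux

namespace SFTAux

lemma key (β α : ℝ) (hβ1 : 1 < β) (hβ2 : β < 2) (hα0 : 0 < α) (hα2 : α < 2 - β)
    (hsft : IsSFT (OmegaSet β α)) : α ∈ Subfield.closure ({β} : Set ℝ) := by
  classical
  obtain ⟨m, p, hp, hper⟩ := mu_eventually_periodic hβ1 hβ2 hα0 hα2 hsft
  set y : ℕ → ℝ := fun k => (Tpos β α)^[k] 1 with hy
  have h1mem : (1:ℝ) ∈ Set.Icc (0:ℝ) 1 := ⟨by norm_num, le_refl _⟩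
  have hymem : ∀ k, y k ∈ Set.Icc (0:ℝ) 1 := by
    intro k; induction k with
    | zero => simpa [hy]
    | succ k ih =>
      have : y (k+1) = Tpos β α (y k) := by
        simp only [hy]; rw [Function.iterate_succ_apply']
      rw [this]
      exact (step_pos hβ1 hβ2 hα0 hα2 ih).1
  have hstep : ∀ k, y (k+1) = β * y k + α - (cond (bp β α (y k)) 1 0) := by
    intro k
    have h1 : y (k+1) = Tpos β α (y k) := by
      simp only [hy]; rw [Function.iterate_succ_apply']
    rw [h1]
    exact (step_pos hβ1 hβ2 hα0 hα2 (hymem k)).2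
  have hbit : ∀ j, bp β α (y (m + p + j)) = bp β α (y (m + j)) := by
    intro j
    have h2 : m + j + p = m + p + j := by omega
    have h3 := hper j
    rw [h2] at h3
    exact h3
  have hdiff : ∀ j, y (m + p + j) - y (m + j) = β ^ j * (y (m + p) - y m) := by
    intro j; induction j with
    | zero => simp
    | succ j ih =>
      have e1 : m + p + (j+1) = (m + p + j) + 1 := by omega
      have e2 : m + (j+1) = (m + j) + 1 := by omega
      rw [e1, e2, hstep, hstep, hbit j, pow_succ]
      ring_nf
      ring_nf at ih
      nlinarith [ih]
  have hyeq : y (m + p) = y m := by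
    by_contra hne
    have hpos : 0 < |y (m + p) - y m| := abs_pos.mpr (sub_ne_zero.mpr hne)
    have habs : ∀ j : ℕ, β ^ j * |y (m + p) - y m| ≤ 1 := by
      intro j
      have h1 := hdiff j
      have a1 := hymem (m + p + j)
      have a2 := hymem (m + j)
      have h2 : |y (m + p + j) - y (m + j)| ≤ 1 := by
        rw [abs_le]
        constructor
        · linarith [a1.1, a2.2]
        · linarith [a1.2, a2.1]
      calc β ^ j * |y (m + p) - y m| = |β ^ j * (y (m + p) - y m)| := by
            rw [abs_mul, abs_of_nonneg (pow_nonneg (by linarith : (0:ℝ) ≤ β) j)]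
        _ = |y (m + p + j) - y (m + j)| := by rw [← h1]
        _ ≤ 1 := h2
    obtain ⟨j, hj⟩ := pow_unbounded_of_one_lt (1 / |y (m + p) - y m|) hβ1
    rw [div_lt_iff₀ hpos] at hj
    have := habs j
    nlinarith
  have hβmem : β ∈ Subfield.closure ({β} : Set ℝ) :=
    Subfield.subset_closure (Set.mem_singleton _)
  have horb : ∀ k, ∃ h ∈ Subfield.closure ({β} : Set ℝ),
      y k = β ^ k + α * (∑ i ∈ Finset.range k, β ^ i) + h := by
    intro k; induction k with
    | zero => exact ⟨0, Subfield.zero_mem _, by simp [hy]⟩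
    | succ k ih =>
      obtain ⟨h, hh, hk⟩ := ih
      refine ⟨β * h - (cond (bp β α (y k)) 1 0), ?_, ?_⟩
      · refine sub_mem (mul_mem hβmem hh) ?_
        cases bp β α (y k) <;> simp [Subfield.zero_mem, Subfield.one_mem]
      · rw [hstep k, geom_sum_succ]
        linear_combination β * hk
  obtain ⟨h1, hh1, e1⟩ := horb m
  obtain ⟨h2, hh2, e2⟩ := horb (m + p)
  have hGmem : ∀ k : ℕ, (∑ i ∈ Finset.range k, β ^ i) ∈ Subfield.closure ({β} : Set ℝ) :=
    fun k => sum_mem (fun i _ => pow_mem hβmem i)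
  have hCpos : 0 < (∑ i ∈ Finset.range (m + p), β ^ i) - (∑ i ∈ Finset.range m, β ^ i) := by
    have hsub : (∑ i ∈ Finset.Ico m (m + p), β ^ i) =
        (∑ i ∈ Finset.range (m + p), β ^ i) - (∑ i ∈ Finset.range m, β ^ i) :=
      Finset.sum_Ico_eq_sub _ (by omega)
    rw [← hsub]
    apply Finset.sum_pos
    · intro i _; exact pow_pos (by linarith) i
    · exact Finset.nonempty_Ico.mpr (by omega)
  have hkey : α * ((∑ i ∈ Finset.range (m + p), β ^ i) - (∑ i ∈ Finset.range m, β ^ i)) =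
      β ^ m - β ^ (m + p) + h1 - h2 := by
    have h3 := hyeq
    rw [e2, e1] at h3
    linarith
  have hα_eq : α = (β ^ m - β ^ (m + p) + h1 - h2) /
      ((∑ i ∈ Finset.range (m + p), β ^ i) - (∑ i ∈ Finset.range m, β ^ i)) := by
    rw [eq_div_iff hCpos.ne']
    exact hkey
  rw [hα_eq]
  exact Subfield.div_mem _
    (sub_mem (add_mem (sub_mem (pow_mem hβmem m) (pow_mem hβmem (m + p))) hh1) hh2)
    (sub_mem (hGmem (m + p)) (hGmem m))

lemma countable_closure_singleton (β : ℝ) :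
    (Subfield.closure ({β} : Set ℝ) : Set ℝ).Countable := by
  classical
  haveI : Countable (AddMonoidAlgebra ℚ ℕ) := AddMonoidAlgebra.coeff_injective.countable
  haveI : Countable (Polynomial ℚ) :=
    Function.Injective.countable (f := Polynomial.toFinsupp)
      (fun a b h => by cases a; cases b; simpa using h)
  set f : Polynomial ℚ × Polynomial ℚ → ℝ :=
    fun pq => (Polynomial.aeval β) pq.1 / (Polynomial.aeval β) pq.2 with hf
  have hsub : (Subfield.closure ({β} : Set ℝ) : Set ℝ) ⊆ Set.range f := by
    intro x hx
    induction hx using Subfield.closure_induction with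
    | mem z hz =>
      rcases hz with rfl
      exact ⟨(Polynomial.X, 1), by simp [hf]⟩
    | one => exact ⟨(1, 1), by simp [hf]⟩
    | add a b ha hb iha ihb =>
      obtain ⟨⟨p1, q1⟩, rfl⟩ := iha
      obtain ⟨⟨p2, q2⟩, rfl⟩ := ihb
      by_cases h1 : (Polynomial.aeval β) q1 = 0
      · refine ⟨(p2, q2), ?_⟩
        simp only [hf, h1, div_zero, zero_add]
      by_cases h2 : (Polynomial.aeval β) q2 = 0
      · refine ⟨(p1, q1), ?_⟩
        simp only [hf, h2, div_zero, add_zero]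
      refine ⟨(p1 * q2 + p2 * q1, q1 * q2), ?_⟩
      simp only [hf, map_add, map_mul]
      rw [div_add_div _ _ h1 h2]
      ring_nf
    | neg a ha iha =>
      obtain ⟨⟨p1, q1⟩, rfl⟩ := iha
      exact ⟨(-p1, q1), by simp [hf, neg_div]⟩
    | inv a ha iha =>
      obtain ⟨⟨p1, q1⟩, rfl⟩ := iha
      exact ⟨(q1, p1), by simp [hf, inv_div]⟩
    | mul a b ha hb iha ihb =>
      obtain ⟨⟨p1, q1⟩, rfl⟩ := iha
      obtain ⟨⟨p2, q2⟩, rfl⟩ := ihb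
      exact ⟨(p1 * p2, q1 * q2), by simp [hf, map_mul, div_mul_div_comm]⟩
  exact (Set.countable_range f).mono hsub

end SFTAux


theorem sft_alpha_in_field_and_countable :
    (∀ β α : ℝ, β ∈ Set.Ioo (1 : ℝ) 2 → α ∈ Set.Ioo (0 : ℝ) (2 - β) →
      IsSFT (OmegaSet β α) → α ∈ Subfield.closure {β}) ∧
    (∀ β : ℝ, β ∈ Set.Ioo (1 : ℝ) 2 →
      Set.Countable {α : ℝ | α ∈ Set.Ioo (0 : ℝ) (2 - β) ∧ IsSFT (OmegaSet β α)}) := by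
  constructor
  · intro β α hβ hα hsft
    exact SFTAux.key β α hβ.1 hβ.2 hα.1 hα.2 hsft
  · intro β hβ
    apply Set.Countable.mono ?_ (SFTAux.countable_closure_singleton β)
    intro α hα
    exact SFTAux.key β α hβ.1 hβ.2 hα.1.1 hα.1.2 hα.2
end
end
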